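/- For every α ∈ (0,1), the Mittag-Leffler random variable identity holds: if M_α has the law of Z_α^{−α} (Z_α the standard positive α-stable variable with E[e^{-λZ_α}] = e^{-λ^α}), then E_α(−x) = E[e^{-x M_α}] for all x ≥ 0, i.e. ∑_{n≥0} (−x)^n/Γ(1+αn) = E[exp(−x Z_α^{−α})]. -/

import Mathlib

open Real MeasureTheory

open scoped ENNReal

section PollardAux

open Set Filter

lemma gamma_conv {α : ℝ} (hα0 : 0 < α) (hα1 : α < 1) {y : ℝ} (hy : 1 ≤ y) :
    y * Real.Gamma y ≤ (y + α) ^ (1 - α) * Real.Gamma (y + α) := by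
  have hy0 : 0 < y := lt_of_lt_of_le one_pos hy
  have hyα : 0 < y + α := by linarith
  have h := Real.convexOn_log_Gamma.2 (Set.mem_Ioi.2 hyα)
    (Set.mem_Ioi.2 (by linarith : (0:ℝ) < y + α + 1)) hα0.le
    (by linarith : (0:ℝ) ≤ 1 - α) (by ring)
  have heq : α • (y + α) + (1 - α) • (y + α + 1) = y + 1 := by
    simp only [smul_eq_mul]; ring
  rw [heq] at h
  simp only [Function.comp_apply, smul_eq_mul] at h
  rw [Real.Gamma_add_one hy0.ne', Real.Gamma_add_one hyα.ne'] at h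
  have hΓy : 0 < Real.Gamma y := Real.Gamma_pos_of_pos hy0
  have hΓyα : 0 < Real.Gamma (y + α) := Real.Gamma_pos_of_pos hyα
  have h2 : Real.log (y * Real.Gamma y) ≤
      Real.log ((y + α) ^ (1 - α) * Real.Gamma (y + α)) := by
    rw [Real.log_mul hy0.ne' hΓy.ne',
      Real.log_mul (Real.rpow_pos_of_pos hyα _).ne' hΓyα.ne',
      Real.log_rpow hyα]
    rw [Real.log_mul hyα.ne' hΓyα.ne', Real.log_mul hy0.ne' hΓy.ne'] at h
    nlinarith [h]
  exact (Real.log_le_log_iff (by positivity) (by positivity)).mp h2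

lemma ML_summable {α : ℝ} (hα0 : 0 < α) (hα1 : α < 1) {x : ℝ} (hx : 0 ≤ x) :
    Summable (fun n : ℕ => x ^ n / Real.Gamma (1 + α * n)) := by
  refine summable_of_ratio_norm_eventually_le (r := 1/2) (by norm_num) ?_
  have h1 : Tendsto (fun n : ℕ => (1 + α * n) ^ α) atTop atTop := by
    apply (tendsto_rpow_atTop hα0).comp
    apply tendsto_atTop_add_const_left
    exact tendsto_natCast_atTop_atTop.const_mul_atTop hα0
  filter_upwards [h1.eventually_ge_atTop (4 * x)] with n hn
  set y : ℝ := 1 + α * n with hy_def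
  have hy1 : (1:ℝ) ≤ y := by
    have : (0:ℝ) ≤ α * n := by positivity
    simp [hy_def]; linarith
  have hy0 : (0:ℝ) < y := lt_of_lt_of_le one_pos hy1
  have hyα : (0:ℝ) < y + α := by linarith
  have hΓy : 0 < Real.Gamma y := Real.Gamma_pos_of_pos hy0
  have hΓyα : 0 < Real.Gamma (y + α) := Real.Gamma_pos_of_pos hyα
  -- (y+α)^(1-α) ≤ 2 * y^(1-α)
  have hb : (y + α) ^ (1-α) ≤ 2 * y ^ (1-α) := by
    calc (y + α) ^ (1-α) ≤ (2*y) ^ (1-α) := by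
          apply Real.rpow_le_rpow hyα.le (by linarith) (by linarith)
      _ = 2 ^ (1-α) * y ^ (1-α) := Real.mul_rpow (by norm_num) hy0.le
      _ ≤ 2 * y ^ (1-α) := by
          have : (2:ℝ) ^ (1-α) ≤ 2 ^ (1:ℝ) :=
            Real.rpow_le_rpow_of_exponent_le (by norm_num) (by linarith)
          simp only [Real.rpow_one] at this
          have := Real.rpow_pos_of_pos hy0 (1-α)
          nlinarith
  have hkey : y ^ α * Real.Gamma y ≤ 2 * Real.Gamma (y + α) := by
    have h2 := gamma_conv hα0 hα1 hy1
    have hsplit : y ^ (1-α) * y ^ α = y := by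
      rw [← Real.rpow_add hy0]; simp
    have h3 : y * Real.Gamma y ≤ 2 * y ^ (1-α) * Real.Gamma (y + α) := by
      calc y * Real.Gamma y ≤ (y + α) ^ (1-α) * Real.Gamma (y + α) := h2
        _ ≤ 2 * y ^ (1-α) * Real.Gamma (y + α) := by
            apply mul_le_mul_of_nonneg_right hb hΓyα.le
    rw [← hsplit] at h3
    have hpos := Real.rpow_pos_of_pos hy0 (1-α)
    nlinarith
  -- now the main inequality
  have hΓ2 : 2 * x * Real.Gamma y ≤ Real.Gamma (y + α) := by nlinarith
  have hcast : 1 + α * ((n:ℝ) + 1) = y + α := by simp [hy_def]; ring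
  rw [Real.norm_eq_abs, Real.norm_eq_abs, abs_of_nonneg (by positivity),
    abs_of_nonneg (by positivity)]
  push_cast
  rw [hcast]
  have hform : 1/2 * (x ^ n / Real.Gamma y) = (x ^ n / 2) / Real.Gamma y := by ring
  rw [hform, div_le_div_iff₀ hΓyα hΓy]
  have hxn : (0:ℝ) ≤ x ^ n := by positivity
  have := mul_le_mul_of_nonneg_left hΓ2 hxn
  nlinarith [pow_succ x n]

lemma int_rpow_exp_mul {s t : ℝ} (hs : 0 < s) (ht : 0 < t) :
    IntegrableOn (fun l : ℝ => l ^ (s-1) * Real.exp (-(t * l))) (Set.Ioi 0) := by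
  have h0 : IntegrableOn (fun u : ℝ => Real.exp (-u) * u ^ (s-1)) (Set.Ioi 0) :=
    Real.GammaIntegral_convergent hs
  have h1 : IntegrableOn (fun l : ℝ => Real.exp (-(t*l)) * (t*l) ^ (s-1)) (Set.Ioi 0) := by
    have := (integrableOn_Ioi_comp_mul_left_iff
      (fun u : ℝ => Real.exp (-u) * u ^ (s-1)) 0 ht).mpr
    rw [mul_zero] at this
    exact this h0
  have h2 : IntegrableOn
      (fun l : ℝ => (t ^ (s-1))⁻¹ * (Real.exp (-(t*l)) * (t*l) ^ (s-1))) (Set.Ioi 0) :=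
    h1.const_mul _
  apply h2.congr_fun _ measurableSet_Ioi
  intro l hl
  rw [Set.mem_Ioi] at hl
  simp only []
  rw [Real.mul_rpow ht.le hl.le]
  field_simp [(Real.rpow_pos_of_pos ht (s-1)).ne']

lemma int_rpow_exp_rpow {p q : ℝ} (hp : 0 < p) (hq : -1 < q) :
    IntegrableOn (fun x : ℝ => x ^ q * Real.exp (-x ^ p)) (Set.Ioi 0) := by
  refine (integrableOn_Ioi_comp_rpow_iff'
    (fun x : ℝ => x ^ q * Real.exp (-x ^ p)) (one_div_ne_zero hp.ne')).mp ?_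
  have h0 : IntegrableOn (fun u : ℝ => Real.exp (-u) * u ^ ((q+1)/p - 1)) (Set.Ioi 0) :=
    Real.GammaIntegral_convergent (div_pos (by linarith) hp)
  apply h0.congr_fun _ measurableSet_Ioi
  intro xv hx
  rw [Set.mem_Ioi] at hx
  simp only [smul_eq_mul]
  have e1 : ((xv ^ (1/p)) ^ p) = xv := by
    rw [← Real.rpow_mul hx.le, one_div_mul_cancel hp.ne', Real.rpow_one]
  have e2 : ((xv ^ (1/p)) ^ q) = xv ^ (1/p * q) := by
    rw [← Real.rpow_mul hx.le]
  rw [e1, e2, show (q+1)/p - 1 = (1/p-1) + (1/p*q) by field_simp; ring, Real.rpow_add hx]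
  ring

lemma moment (α : ℝ) (hα0 : 0 < α) (hα1 : α < 1)
    (μ : Measure ℝ) (hprob : IsProbabilityMeasure μ) (hμ0 : μ {x | x ≤ 0} = 0)
    (hlaplace : ∀ l : ℝ, 0 ≤ l →
      ∫ t in Set.Ioi (0:ℝ), Real.exp (-l * t) ∂μ = Real.exp (-(l ^ α)))
    (n : ℕ) :
    ∫⁻ t in Set.Ioi (0:ℝ), ENNReal.ofReal ((t ^ (-α)) ^ n) ∂μ =
      ENNReal.ofReal ((Nat.factorial n : ℝ) / Real.Gamma (1 + α * n)) := by
  have hIoi : μ (Set.Ioi (0:ℝ)) = 1 := by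
    have hset : Set.Ioi (0:ℝ) = {x : ℝ | x ≤ 0}ᶜ := by ext z; simp [not_le]
    rw [hset, measure_compl (by exact measurableSet_Iic) (by simp [hμ0]), hμ0]
    simp
  cases n with
  | zero => simp [Real.Gamma_one, hIoi]
  | succ m =>
    set s : ℝ := α * ((m:ℝ)+1) with hs_def
    have hs0 : 0 < s := by positivity
    have hΓs : 0 < Real.Gamma s := Real.Gamma_pos_of_pos hs0
    set X : ℝ≥0∞ := ∫⁻ t in Set.Ioi (0:ℝ), ENNReal.ofReal ((t ^ (-α)) ^ (m+1)) ∂μ with hX_def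
    -- Step 1 : multiply by Γ s and insert the Gamma integral representation
    have step1 : ENNReal.ofReal (Real.Gamma s) * X =
        ∫⁻ t in Set.Ioi (0:ℝ),
          (∫⁻ l in Set.Ioi (0:ℝ), ENNReal.ofReal (l ^ (s-1) * Real.exp (-(t * l)))) ∂μ := by
      rw [hX_def, ← lintegral_const_mul' _ _ ENNReal.ofReal_ne_top]
      apply setLIntegral_congr_fun measurableSet_Ioi
      intro t ht
      dsimp only
      rw [Set.mem_Ioi] at ht
      have hpow : ((t ^ (-α) : ℝ)) ^ (m+1) = t ^ (-s) := by
        rw [← Real.rpow_natCast (t ^ (-α)) (m+1), ← Real.rpow_mul ht.le]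
        congr 1
        push_cast
        ring
      rw [← ofReal_integral_eq_lintegral_ofReal (int_rpow_exp_mul hs0 ht)
        ((ae_restrict_iff' measurableSet_Ioi).mpr (Filter.Eventually.of_forall
          (fun l hl => by have h0l : (0:ℝ) < l := hl; positivity)))]
      rw [integral_rpow_mul_exp_neg_mul_Ioi hs0 ht, hpow,
        ← ENNReal.ofReal_mul hΓs.le]
      congr 1
      rw [one_div, Real.inv_rpow ht.le, ← Real.rpow_neg ht.le]
      ring
    -- Step 2 : Tonelli swap
    have hmeas : AEMeasurable
        (Function.uncurry fun t l => ENNReal.ofReal (l ^ (s-1) * Real.exp (-(t * l))))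
        ((μ.restrict (Set.Ioi 0)).prod (volume.restrict (Set.Ioi 0))) := by
      apply Measurable.aemeasurable
      apply ENNReal.measurable_ofReal.comp
      apply Measurable.mul
      · fun_prop
      · exact ((measurable_fst.mul measurable_snd).neg).exp
    have step2 :
        (∫⁻ t in Set.Ioi (0:ℝ),
          (∫⁻ l in Set.Ioi (0:ℝ), ENNReal.ofReal (l ^ (s-1) * Real.exp (-(t * l)))) ∂μ) =
        ∫⁻ l in Set.Ioi (0:ℝ),
          (∫⁻ t in Set.Ioi (0:ℝ), ENNReal.ofReal (l ^ (s-1) * Real.exp (-(t * l))) ∂μ) :=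
      lintegral_lintegral_swap hmeas
    -- Step 3 : inner t-integral via the Laplace transform
    have step3 : (∫⁻ l in Set.Ioi (0:ℝ),
          (∫⁻ t in Set.Ioi (0:ℝ), ENNReal.ofReal (l ^ (s-1) * Real.exp (-(t * l))) ∂μ)) =
        ∫⁻ l in Set.Ioi (0:ℝ), ENNReal.ofReal (l ^ (s-1) * Real.exp (-(l ^ α))) := by
      apply setLIntegral_congr_fun measurableSet_Ioi
      intro l hl
      rw [Set.mem_Ioi] at hl
      have hls : (0:ℝ) ≤ l ^ (s-1) := (Real.rpow_pos_of_pos hl _).le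
      calc (∫⁻ t in Set.Ioi (0:ℝ), ENNReal.ofReal (l ^ (s-1) * Real.exp (-(t * l))) ∂μ)
          = ∫⁻ t in Set.Ioi (0:ℝ),
              ENNReal.ofReal (l ^ (s-1)) * ENNReal.ofReal (Real.exp (-l * t)) ∂μ := by
            apply setLIntegral_congr_fun measurableSet_Ioi
            intro t ht
            dsimp only
            rw [← ENNReal.ofReal_mul hls]
            congr 2
            ring
        _ = ENNReal.ofReal (l ^ (s-1)) *
              ∫⁻ t in Set.Ioi (0:ℝ), ENNReal.ofReal (Real.exp (-l * t)) ∂μ :=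
            lintegral_const_mul' _ _ ENNReal.ofReal_ne_top
        _ = ENNReal.ofReal (l ^ (s-1)) * ENNReal.ofReal (Real.exp (-(l ^ α))) := by
            congr 1
            rw [← hlaplace l hl.le]
            apply (ofReal_integral_eq_lintegral_ofReal ?_ ?_).symm
            · apply Integrable.mono' (integrable_const (1:ℝ))
              · have hcont : Continuous fun t : ℝ => Real.exp (-l * t) := by fun_prop
                exact hcont.aestronglyMeasurable
              · apply (ae_restrict_iff' measurableSet_Ioi).mpr
                filter_upwards with t ht
                rw [Set.mem_Ioi] at ht
                rw [Real.norm_eq_abs, abs_of_pos (Real.exp_pos _)]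
                rw [Real.exp_le_one_iff]
                nlinarith
            · filter_upwards with t
              exact (Real.exp_pos _).le
        _ = ENNReal.ofReal (l ^ (s-1) * Real.exp (-(l ^ α))) :=
            (ENNReal.ofReal_mul hls).symm
    -- Step 4 : evaluate the remaining Gamma-type integral
    have step4 : (∫⁻ l in Set.Ioi (0:ℝ), ENNReal.ofReal (l ^ (s-1) * Real.exp (-(l ^ α)))) =
        ENNReal.ofReal ((1/α) * (Nat.factorial m : ℝ)) := by
      rw [← ofReal_integral_eq_lintegral_ofReal (int_rpow_exp_rpow hα0 (by linarith : (-1:ℝ) < s - 1))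
        ((ae_restrict_iff' measurableSet_Ioi).mpr (Filter.Eventually.of_forall
          (fun l hl => by have h0l : (0:ℝ) < l := hl; positivity)))]
      rw [integral_rpow_mul_exp_neg_rpow hα0 (by linarith : (-1:ℝ) < s - 1)]
      congr 1
      rw [show (s - 1 + 1) / α = (m:ℝ) + 1 by rw [hs_def]; field_simp; ring]
      rw [Real.Gamma_nat_eq_factorial m]
    -- Step 5 : conclude by cancelling Γ s
    have hmain : ENNReal.ofReal (Real.Gamma s) * X =
        ENNReal.ofReal ((1/α) * (Nat.factorial m : ℝ)) := by
      rw [step1, step2, step3, step4]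
    have htarget : ENNReal.ofReal (Real.Gamma s) *
        ENNReal.ofReal ((Nat.factorial (m+1) : ℝ) / Real.Gamma (1 + α * ((m:ℝ)+1))) =
        ENNReal.ofReal ((1/α) * (Nat.factorial m : ℝ)) := by
      rw [← ENNReal.ofReal_mul hΓs.le]
      congr 1
      rw [show (1:ℝ) + α * ((m:ℝ)+1) = s + 1 by rw [hs_def]; ring,
        Real.Gamma_add_one hs0.ne']
      rw [Nat.factorial_succ]
      push_cast
      rw [hs_def]
      field_simp
    have hne0 : ENNReal.ofReal (Real.Gamma s) ≠ 0 := by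
      simp only [ne_eq, ENNReal.ofReal_eq_zero, not_le]
      exact hΓs
    have hfin := (ENNReal.mul_right_inj hne0 ENNReal.ofReal_ne_top).mp
      (hmain.trans htarget.symm)
    have hc : (1:ℝ) + α * ((m+1 : ℕ) : ℝ) = 1 + α * ((m:ℝ)+1) := by push_cast; ring
    rw [hc]
    exact hfin

end PollardAux

section PollardMain

open Set Filter in
theorem pollard_representation (α : ℝ) (hα : α ∈ Set.Ioo (0:ℝ) 1)
    (μ : Measure ℝ) (hprob : IsProbabilityMeasure μ) (hμ0 : μ {x | x ≤ 0} = 0)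
    -- μ is the law of the standard positive α-stable random variable Z_α :
    (hlaplace : ∀ l : ℝ, 0 ≤ l →
      ∫ t in Set.Ioi (0:ℝ), Real.exp (-l * t) ∂μ = Real.exp (-(l ^ α))) :
    ∀ x : ℝ, 0 ≤ x →
      ∑' n : ℕ, (-x) ^ n / Real.Gamma (1 + α * n) =
        ∫ t in Set.Ioi (0:ℝ), Real.exp (-x * t ^ (-α)) ∂μ := by
  obtain ⟨hα0, hα1⟩ := hα
  intro x hx
  have hexp : ∀ t : ℝ, Real.exp (-x * t ^ (-α)) =
      ∑' n : ℕ, (-x * t ^ (-α)) ^ n / (Nat.factorial n : ℝ) := by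
    intro t
    rw [Real.exp_eq_exp_ℝ, NormedSpace.exp_eq_tsum_div]
  have hmeas : ∀ n : ℕ, AEStronglyMeasurable
      (fun t : ℝ => (-x * t ^ (-α)) ^ n / (Nat.factorial n : ℝ))
      (μ.restrict (Set.Ioi 0)) := by
    intro n
    apply Measurable.aestronglyMeasurable
    fun_prop
  have hlint : ∀ n : ℕ, (∫⁻ t in Set.Ioi (0:ℝ),
      ↑‖(-x * t ^ (-α)) ^ n / (Nat.factorial n : ℝ)‖₊ ∂μ) =
      ENNReal.ofReal (x ^ n / Real.Gamma (1 + α * n)) := by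
    intro n
    have hfac : (0:ℝ) < (Nat.factorial n : ℝ) := by exact_mod_cast Nat.factorial_pos n
    calc (∫⁻ t in Set.Ioi (0:ℝ),
          ↑‖(-x * t ^ (-α)) ^ n / (Nat.factorial n : ℝ)‖₊ ∂μ)
        = ∫⁻ t in Set.Ioi (0:ℝ),
            ENNReal.ofReal (x ^ n / (Nat.factorial n : ℝ)) *
              ENNReal.ofReal ((t ^ (-α)) ^ n) ∂μ := by
          apply setLIntegral_congr_fun measurableSet_Ioi
          intro t ht
          dsimp only
          rw [Set.mem_Ioi] at ht
          have h1 : (0:ℝ) ≤ t ^ (-α) := (Real.rpow_pos_of_pos ht _).le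
          rw [← ENNReal.ofReal_mul (by positivity), ← enorm_eq_nnnorm, ← ofReal_norm]
          congr 1
          rw [Real.norm_eq_abs, abs_div, abs_pow, abs_mul, abs_neg,
            abs_of_nonneg hx, abs_of_nonneg h1, Nat.abs_cast, mul_pow]
          ring
      _ = ENNReal.ofReal (x ^ n / (Nat.factorial n : ℝ)) *
            ENNReal.ofReal ((Nat.factorial n : ℝ) / Real.Gamma (1 + α * n)) := by
          rw [lintegral_const_mul' _ _ ENNReal.ofReal_ne_top,
            moment α hα0 hα1 μ hprob hμ0 hlaplace n]
      _ = ENNReal.ofReal (x ^ n / Real.Gamma (1 + α * n)) := by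
          rw [← ENNReal.ofReal_mul (by positivity)]
          congr 1
          field_simp
      
  have hsum := ML_summable hα0 hα1 hx
  have hne : (∑' n : ℕ, ∫⁻ t in Set.Ioi (0:ℝ),
      ↑‖(-x * t ^ (-α)) ^ n / (Nat.factorial n : ℝ)‖₊ ∂μ) ≠ ⊤ := by
    simp_rw [hlint]
    rw [← ENNReal.ofReal_tsum_of_nonneg (fun n => by positivity) hsum]
    exact ENNReal.ofReal_ne_top
  have hswap : ∫ t in Set.Ioi (0:ℝ), Real.exp (-x * t ^ (-α)) ∂μ =
      ∑' n : ℕ, ∫ t in Set.Ioi (0:ℝ),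
        (-x * t ^ (-α)) ^ n / (Nat.factorial n : ℝ) ∂μ := by
    rw [← integral_tsum hmeas hne]
    simp_rw [hexp]
  rw [hswap]
  apply tsum_congr
  intro n
  have hΓpos : 0 < Real.Gamma (1 + α * n) := Real.Gamma_pos_of_pos (by positivity)
  have hfac : (0:ℝ) < (Nat.factorial n : ℝ) := by exact_mod_cast Nat.factorial_pos n
  have hBmom : ∫ t in Set.Ioi (0:ℝ), ((t ^ (-α)) ^ n) ∂μ =
      (Nat.factorial n : ℝ) / Real.Gamma (1 + α * n) := by
    rw [integral_eq_lintegral_of_nonneg_ae, moment α hα0 hα1 μ hprob hμ0 hlaplace n,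
      ENNReal.toReal_ofReal (by positivity)]
    · apply (ae_restrict_iff' measurableSet_Ioi).mpr
      filter_upwards with t ht
      rw [Set.mem_Ioi] at ht
      positivity
    · apply Measurable.aestronglyMeasurable
      fun_prop
  symm
  calc ∫ t in Set.Ioi (0:ℝ), (-x * t ^ (-α)) ^ n / (Nat.factorial n : ℝ) ∂μ
      = ∫ t in Set.Ioi (0:ℝ), ((-x) ^ n / (Nat.factorial n : ℝ)) * (t ^ (-α)) ^ n ∂μ := by
        congr 1
        ext t
        rw [mul_pow]
        ring
    _ = ((-x) ^ n / (Nat.factorial n : ℝ)) *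
          ((Nat.factorial n : ℝ) / Real.Gamma (1 + α * n)) := by
        rw [MeasureTheory.integral_const_mul, hBmom]
    _ = (-x) ^ n / Real.Gamma (1 + α * n) := by
        field_simp

end PollardMain
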